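/- Let G be a finite tree rooted at o, and suppose o is a δ-center of mass witnessed by subtrees T, T̃ with V(T) ∩ V(T̃) = {o}. Let A be the smallest constant such that the Hardy inequalities ∑_{v∈V(T)}(∑_{e∈ℓ(v)} g(e))² ≤ A ∑_{e∈E(T)} g(e)² and the analogous inequality on T̃ hold for all nonzero g. Then the spectral gap λ of the continuous-time simple random walk on G (each edge at rate 1, uniform stationary distribution) satisfies 1/A ≤ λ ≤ 1/(δA). -/

import Mathlib

open Finset

/-- Edges on the path from `o` to `v` in a tree, encoded by their endpoints farther
from `o`: the vertices `u ≠ o` lying on the path from `o` to `v`. -/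
noncomputable def pathE {V : Type*} [Fintype V] [DecidableEq V] (G : SimpleGraph V) (o v : V) :
    Finset V :=
  Finset.univ.filter fun u => u ≠ o ∧ G.dist o u + G.dist u v = G.dist o v

/-- The Dirichlet form `E(f) = (1/|V|) ∑_{e ∈ E} (f(e₊) - f(e₋))²` of the
continuous-time simple random walk (each edge at rate 1). -/
noncomputable def dirichletForm {V : Type*} [Fintype V] (G : SimpleGraph V)
    [DecidableRel G.Adj] (f : V → ℝ) : ℝ :=
  (∑ x : V, ∑ y ∈ G.neighborFinset x, (f x - f y) ^ 2) / (2 * Fintype.card V)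

/-- The variance `Var(f) = (1/|V|) ∑_v f(v)² - ((1/|V|) ∑_v f(v))²` with respect to
the uniform distribution on `V`. -/
noncomputable def uniformVar {V : Type*} [Fintype V] (f : V → ℝ) : ℝ :=
  (∑ v : V, f v ^ 2) / Fintype.card V - ((∑ v : V, f v) / Fintype.card V) ^ 2

set_option linter.unusedSectionVars false

section
open SimpleGraph Walk

namespace SGH

variable {V : Type*} [Fintype V] [DecidableEq V] {G : SimpleGraph V}

noncomputable def tp (hG : G.IsTree) (u v : V) : G.Walk u v :=
  (hG.isConnected.exists_path_of_dist u v).choose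

lemma tp_isPath (hG : G.IsTree) (u v : V) : (tp hG u v).IsPath :=
  (hG.isConnected.exists_path_of_dist u v).choose_spec.1

lemma tp_length (hG : G.IsTree) (u v : V) : (tp hG u v).length = G.dist u v :=
  (hG.isConnected.exists_path_of_dist u v).choose_spec.2

lemma walk_unique (hG : G.IsTree) {u v : V} {p q : G.Walk u v} (hp : p.IsPath)
    (hq : q.IsPath) : p = q := by
  have := hG.2.path_unique ⟨p, hp⟩ ⟨q, hq⟩
  exact congrArg Subtype.val this

lemma eq_tp (hG : G.IsTree) {u v : V} {p : G.Walk u v} (hp : p.IsPath) : p = tp hG u v :=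
  walk_unique hG hp (tp_isPath hG u v)

lemma path_length (hG : G.IsTree) {u v : V} {p : G.Walk u v} (hp : p.IsPath) :
    p.length = G.dist u v := by rw [eq_tp hG hp, tp_length]

lemma mem_support_dist (hG : G.IsTree) {u v x : V} (hx : x ∈ (tp hG u v).support) :
    G.dist u x + G.dist x v = G.dist u v := by
  have h1 : ((tp hG u v).takeUntil x hx).length = G.dist u x :=
    path_length hG ((tp_isPath hG u v).takeUntil hx)
  have h2 : ((tp hG u v).dropUntil x hx).length = G.dist x v :=
    path_length hG ((tp_isPath hG u v).dropUntil hx)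
  have h3 := congrArg Walk.length ((tp hG u v).take_spec hx)
  rw [Walk.length_append, h1, h2, tp_length] at h3
  omega

lemma dist_mem_support (hG : G.IsTree) {u v x : V}
    (hd : G.dist u x + G.dist x v = G.dist u v) : x ∈ (tp hG u v).support := by
  have hlen : ((tp hG u x).append (tp hG x v)).length = G.dist u v := by
    rw [Walk.length_append, tp_length, tp_length, hd]
  have hpath : ((tp hG u x).append (tp hG x v)).IsPath :=
    Walk.isPath_of_length_eq_dist _ hlen
  have := eq_tp hG hpath
  rw [← this, Walk.mem_support_append_iff]
  exact Or.inl ((tp hG u x).end_mem_support)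

lemma mem_pathE_iff (hG : G.IsTree) {o v u : V} :
    u ∈ pathE G o v ↔ u ≠ o ∧ u ∈ (tp hG o v).support := by
  unfold pathE
  simp only [mem_filter, mem_univ, true_and]
  exact and_congr_right fun _ =>
    ⟨fun h => dist_mem_support hG h, fun h => mem_support_dist hG h⟩

/-- decomposition of a non-nil walk as `concat`. -/
lemma exists_concat_decomp {u v : V} (p : G.Walk u v) (hnn : ¬p.Nil) :
    ∃ (x : V) (q : G.Walk u x) (h : G.Adj x v), p = q.concat h := by
  have hrev : ¬p.reverse.Nil := by
    rw [Walk.nil_iff_length_eq] at hnn ⊢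
    rwa [Walk.length_reverse]
  obtain ⟨x, h, q, hq⟩ := Walk.not_nil_iff.mp hrev
  refine ⟨x, q.reverse, h.symm, ?_⟩
  have : p.reverse.reverse = (Walk.cons h q).reverse := by rw [hq]
  rw [Walk.reverse_reverse] at this
  rw [this, Walk.reverse_cons, Walk.concat_eq_append]

/-- Parent of a vertex `u ≠ o` in the tree rooted at `o`. -/
noncomputable def par (hG : G.IsTree) (o u : V) : V :=
  if h : (tp hG o u).Nil then o
  else (exists_concat_decomp (tp hG o u) h).choose

lemma tp_not_nil (hG : G.IsTree) {o u : V} (hu : u ≠ o) : ¬ (tp hG o u).Nil := by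
  rw [Walk.nil_iff_length_eq, tp_length]
  exact SimpleGraph.dist_ne_zero_iff_ne_and_reachable.mpr ⟨Ne.symm hu, hG.isConnected o u⟩

lemma par_props (hG : G.IsTree) {o u : V} (hu : u ≠ o) :
    G.Adj (par hG o u) u ∧ G.dist o (par hG o u) + 1 = G.dist o u ∧
    (tp hG o u).support = (tp hG o (par hG o u)).support ++ [u] ∧
    u ∉ (tp hG o (par hG o u)).support := by
  have hnn := tp_not_nil hG hu
  have hq := (exists_concat_decomp (tp hG o u) hnn).choose_spec
  obtain ⟨q, hadj, heq⟩ := hq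
  have hpar : par hG o u = (exists_concat_decomp (tp hG o u) hnn).choose := by
    unfold par; rw [dif_neg hnn]
  rw [hpar]
  have hsupp := congrArg Walk.support heq
  rw [Walk.support_concat] at hsupp
  have hnodup : (q.support ++ [u]).Nodup := by
    rw [← hsupp]; exact (tp_isPath hG o u).2
  have hqnodup : q.support.Nodup := hnodup.of_append_left
  have hqpath : q.IsPath := (Walk.isPath_def q).mpr hqnodup
  have humem : u ∉ q.support := by
    have := List.disjoint_of_nodup_append hnodup
    intro hmem; exact this hmem (List.mem_singleton_self u)
  have hqtp : q = tp hG o _ := eq_tp hG hqpath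
  have hlen : q.length + 1 = G.dist o u := by
    have := congrArg Walk.length heq
    rw [Walk.length_concat, tp_length] at this
    omega
  refine ⟨hadj, ?_, ?_, ?_⟩
  · have := path_length hG hqpath
    omega
  · rw [← hqtp]; exact hsupp
  · rw [← hqtp]; exact humem

lemma par_adj (hG : G.IsTree) {o u : V} (hu : u ≠ o) : G.Adj (par hG o u) u :=
  (par_props hG hu).1

lemma par_dist (hG : G.IsTree) {o u : V} (hu : u ≠ o) :
    G.dist o (par hG o u) + 1 = G.dist o u := (par_props hG hu).2.1

lemma tp_self_support (hG : G.IsTree) (o : V) : (tp hG o o).support = [o] := by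
  have : (tp hG o o).length = 0 := by rw [tp_length]; simp
  exact Walk.nil_iff_support_eq.mp (Walk.nil_iff_length_eq.mpr this)

lemma pathE_self_empty (hG : G.IsTree) (o : V) : pathE G o o = ∅ := by
  ext u
  simp only [Finset.notMem_empty, iff_false]
  rw [mem_pathE_iff hG, tp_self_support hG o]
  rintro ⟨h1, h2⟩
  simp at h2; exact h1 h2

lemma pathE_recursion (hG : G.IsTree) {o v : V} (hv : v ≠ o) :
    v ∉ pathE G o (par hG o v) ∧
    pathE G o v = insert v (pathE G o (par hG o v)) := by
  obtain ⟨hadj, hdist, hsupp, hmem⟩ := par_props hG hv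
  constructor
  · rw [mem_pathE_iff hG]
    rintro ⟨-, h⟩; exact hmem h
  · ext u
    rw [mem_pathE_iff hG, Finset.mem_insert, mem_pathE_iff hG, hsupp]
    simp only [List.mem_append, List.mem_singleton]
    constructor
    · rintro ⟨h1, h2 | h2⟩
      · exact Or.inr ⟨h1, h2⟩
      · exact Or.inl h2
    · rintro (rfl | ⟨h1, h2⟩)
      · exact ⟨hv, Or.inr rfl⟩
      · exact ⟨h1, Or.inl h2⟩

lemma self_mem_pathE (hG : G.IsTree) {o v : V} (hv : v ≠ o) : v ∈ pathE G o v := by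
  rw [mem_pathE_iff hG]
  exact ⟨hv, (tp hG o v).end_mem_support⟩

lemma isPath_concat (hG : G.IsTree) {u v w : V} {p : G.Walk u v} (hp : p.IsPath)
    (h : G.Adj v w) (hw : w ∉ p.support) : (p.concat h).IsPath := by
  rw [Walk.isPath_def, Walk.support_concat]
  rw [List.nodup_append]
  exact ⟨hp.2, List.nodup_singleton w, by
    intro a ha b hb
    rw [List.mem_singleton] at hb
    subst hb; intro hab; subst hab; exact hw ha⟩

lemma par_concat (hG : G.IsTree) {o u : V} (hu : u ≠ o) :
    ∃ (h : G.Adj (par hG o u) u), tp hG o u = (tp hG o (par hG o u)).concat h := by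
  have hnn := tp_not_nil hG hu
  have hq := (exists_concat_decomp (tp hG o u) hnn).choose_spec
  obtain ⟨q, hadj, heq⟩ := hq
  have hpar : par hG o u = (exists_concat_decomp (tp hG o u) hnn).choose := by
    unfold par; rw [dif_neg hnn]
  rw [hpar]
  have hsupp := congrArg Walk.support heq
  rw [Walk.support_concat] at hsupp
  have hnodup : (q.support ++ [u]).Nodup := by
    rw [← hsupp]; exact (tp_isPath hG o u).2
  have hqpath : q.IsPath := (Walk.isPath_def q).mpr hnodup.of_append_left
  have hqtp : q = tp hG o _ := eq_tp hG hqpath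
  rw [hqtp] at heq
  exact ⟨hadj, heq⟩

lemma par_eq_of (hG : G.IsTree) {o u w : V} (hadj : G.Adj w u)
    (hd : G.dist o w + 1 = G.dist o u) : w = par hG o u := by
  have hu : u ≠ o := by
    intro h; subst h
    simp [SimpleGraph.dist_self] at hd
  have hmem : u ∉ (tp hG o w).support := by
    intro hmem
    have h1 := mem_support_dist hG hmem
    have h2 : G.dist u w = 1 := SimpleGraph.dist_eq_one_iff_adj.mpr hadj.symm
    omega
  have hpath : ((tp hG o w).concat hadj).IsPath := isPath_concat hG (tp_isPath hG o w) hadj hmem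
  have heqtp : (tp hG o w).concat hadj = tp hG o u := eq_tp hG hpath
  obtain ⟨hadj', heq⟩ := par_concat hG hu
  rw [← heqtp] at heq
  obtain ⟨hv, -⟩ := Walk.concat_inj heq.symm
  exact hv.symm

lemma par_dichotomy (hG : G.IsTree) {o x y : V} (hadj : G.Adj x y) :
    (x ≠ o ∧ y = par hG o x) ∨ (y ≠ o ∧ x = par hG o y) := by
  by_cases hmem : y ∈ (tp hG o x).support
  · have hxo : x ≠ o := by
      intro h; subst h
      rw [tp_self_support hG] at hmem
      simp at hmem
      exact hadj.ne hmem.symm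
    have h1 := mem_support_dist hG hmem
    have h2 : G.dist y x = 1 := SimpleGraph.dist_eq_one_iff_adj.mpr hadj.symm
    refine Or.inl ⟨hxo, ?_⟩
    exact par_eq_of hG hadj.symm (by omega)
  · have hpath : ((tp hG o x).concat hadj).IsPath := isPath_concat hG (tp_isPath hG o x) hadj hmem
    have hlen : ((tp hG o x).concat hadj).length = G.dist o x + 1 := by
      rw [Walk.length_concat, tp_length]
    have hd : G.dist o x + 1 = G.dist o y := by
      rw [← hlen, path_length hG hpath]
    have hyo : y ≠ o := by
      intro h; subst h; simp [SimpleGraph.dist_self] at hd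
    exact Or.inr ⟨hyo, par_eq_of hG hadj hd⟩

lemma par_dichotomy_excl (hG : G.IsTree) {o x y : V} (h1 : x ≠ o) (h2 : y = par hG o x) :
    ¬(y ≠ o ∧ x = par hG o y) := by
  rintro ⟨hy, hx⟩
  have d1 := par_dist hG h1
  have d2 := par_dist hG hy
  rw [← h2] at d1
  rw [← hx] at d2
  omega

lemma support_subset_of_connected (hG : G.IsTree) {o : V} {S : Finset V}
    (hconn : (G.induce (S : Set V)).Connected) (ho : o ∈ S) {v : V} (hv : v ∈ S) :
    ∀ x ∈ (tp hG o v).support, x ∈ S := by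
  obtain ⟨W⟩ := hconn.preconnected ⟨o, ho⟩ ⟨v, hv⟩
  let emb : G.induce (S : Set V) ↪g G := SimpleGraph.Embedding.induce (S : Set V)
  have hW : ∀ x ∈ (W.map emb.toHom).support, x ∈ S := by
    intro x hx
    rw [Walk.support_map, List.mem_map] at hx
    obtain ⟨a, -, rfl⟩ := hx
    exact a.2
  have hbp : (W.map emb.toHom).bypass.IsPath := Walk.bypass_isPath _
  have heq : (W.map emb.toHom).bypass = tp hG o v := eq_tp hG hbp
  intro x hx
  rw [← heq] at hx
  exact hW x (Walk.support_bypass_subset _ hx)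

lemma pathE_subset (hG : G.IsTree) {o : V} {S : Finset V}
    (hconn : (G.induce (S : Set V)).Connected) (ho : o ∈ S) {v : V} (hv : v ∈ S) :
    pathE G o v ⊆ S.filter (fun u => u ≠ o) := by
  intro u hu
  rw [mem_pathE_iff hG] at hu
  rw [Finset.mem_filter]
  exact ⟨support_subset_of_connected hG hconn ho hv u hu.2, hu.1⟩

lemma par_mem_of_connected (hG : G.IsTree) {o : V} {S : Finset V}
    (hconn : (G.induce (S : Set V)).Connected) (ho : o ∈ S) {u : V} (hu : u ∈ S)
    (huo : u ≠ o) : par hG o u ∈ S := by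
  obtain ⟨hadj, heq⟩ := par_concat hG huo
  have : par hG o u ∈ (tp hG o u).support := by
    rw [heq, Walk.support_concat]
    rw [List.mem_append]
    exact Or.inl ((tp hG o (par hG o u)).end_mem_support)
  exact support_subset_of_connected hG hconn ho hu _ this

lemma telescope (hG : G.IsTree) (o : V) (h : V → ℝ) (h0 : h o = 0) (v : V) :
    ∑ u ∈ pathE G o v, (h u - h (par hG o u)) = h v := by
  suffices H : ∀ (n : ℕ) (v : V), G.dist o v = n →
      ∑ u ∈ pathE G o v, (h u - h (par hG o u)) = h v by exact H _ v rfl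
  intro n
  induction n using Nat.strong_induction_on with
  | _ n ih =>
    intro v hn
    by_cases hv : v = o
    · subst hv
      rw [pathE_self_empty hG, Finset.sum_empty, h0]
    · obtain ⟨hnm, hrec⟩ := pathE_recursion hG hv
      rw [hrec, Finset.sum_insert hnm]
      have hd := par_dist hG hv
      have := ih (G.dist o (par hG o v)) (by omega) (par hG o v) rfl
      rw [this]
      ring

lemma decomp (hG : G.IsTree) (o : V) [DecidableRel G.Adj] (F : V → V → ℝ)
    (hsym : ∀ x y, F x y = F y x) :
    ∑ x : V, ∑ y ∈ G.neighborFinset x, F x y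
      = 2 * ∑ u ∈ Finset.univ.filter (fun u => u ≠ o), F u (par hG o u) := by
  have key : ∀ x : V, ∑ y ∈ G.neighborFinset x, F x y
      = (∑ y : V, if x ≠ o ∧ y = par hG o x then F x y else 0)
        + ∑ y : V, if y ≠ o ∧ x = par hG o y then F x y else 0 := by
    intro x
    rw [SimpleGraph.neighborFinset_eq_filter, Finset.sum_filter, ← Finset.sum_add_distrib]
    refine Finset.sum_congr rfl fun y _ => ?_
    by_cases hadj : G.Adj x y
    · rw [if_pos hadj]
      rcases par_dichotomy hG hadj with ⟨h1, h2⟩ | ⟨h1, h2⟩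
      · rw [if_pos ⟨h1, h2⟩, if_neg (par_dichotomy_excl hG h1 h2)]
        ring
      · have hnot : ¬(x ≠ o ∧ y = par hG o x) := by
          intro hc
          exact (par_dichotomy_excl hG hc.1 hc.2) ⟨h1, h2⟩
        rw [if_neg hnot, if_pos ⟨h1, h2⟩]
        ring
    · rw [if_neg hadj, if_neg, if_neg]
      · ring
      · rintro ⟨h1, rfl⟩
        exact hadj (par_adj hG h1)
      · rintro ⟨h1, rfl⟩
        exact hadj ((par_adj hG h1).symm)
  rw [Finset.sum_congr rfl fun x _ => key x, Finset.sum_add_distrib]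
  have e1 : ∑ x : V, ∑ y : V, (if x ≠ o ∧ y = par hG o x then F x y else 0)
      = ∑ u ∈ Finset.univ.filter (fun u => u ≠ o), F u (par hG o u) := by
    rw [Finset.sum_filter]
    refine Finset.sum_congr rfl fun x _ => ?_
    by_cases hx : x = o
    · subst hx
      simp
    · have hcongr : ∀ y : V, (if x ≠ o ∧ y = par hG o x then F x y else 0)
          = if y = par hG o x then F x y else 0 := fun y => by simp [hx]
      rw [Finset.sum_congr rfl fun y _ => hcongr y,
        Finset.sum_ite_eq' Finset.univ (par hG o x) (fun y => F x y)]
      simp [hx]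
  have e2 : ∑ x : V, ∑ y : V, (if y ≠ o ∧ x = par hG o y then F x y else 0)
      = ∑ u ∈ Finset.univ.filter (fun u => u ≠ o), F u (par hG o u) := by
    rw [Finset.sum_comm, Finset.sum_filter]
    refine Finset.sum_congr rfl fun y _ => ?_
    by_cases hy : y = o
    · subst hy
      simp
    · have hcongr : ∀ x : V, (if y ≠ o ∧ x = par hG o y then F x y else 0)
          = if x = par hG o y then F x y else 0 := fun x => by simp [hy]
      rw [Finset.sum_congr rfl fun x _ => hcongr x,
        Finset.sum_ite_eq' Finset.univ (par hG o y) (fun x => F x y)]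
      simp [hy, hsym y (par hG o y)]
  rw [e1, e2]
  ring

lemma var_eq (f : V → ℝ) (hn : 0 < (Fintype.card V : ℝ)) :
    uniformVar f = ((Fintype.card V : ℝ) * ∑ v : V, f v ^ 2 - (∑ v : V, f v) ^ 2)
      / (Fintype.card V : ℝ) ^ 2 := by
  unfold uniformVar
  field_simp

lemma var_nonneg (f : V → ℝ) (hn : 0 < (Fintype.card V : ℝ)) : 0 ≤ uniformVar f := by
  rw [var_eq f hn]
  apply div_nonneg _ (by positivity)
  have := sq_sum_le_card_mul_sum_sq (s := (Finset.univ : Finset V)) (f := f)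
  rw [Finset.card_univ] at this
  push_cast at this
  linarith

lemma var_le_sq_dev (f : V → ℝ) (hn : 0 < (Fintype.card V : ℝ)) (c : ℝ) :
    (Fintype.card V : ℝ) * uniformVar f ≤ ∑ v : V, (f v - c) ^ 2 := by
  have hE : ∑ v : V, (f v - c) ^ 2
      = (∑ v : V, f v ^ 2) - 2 * c * (∑ v : V, f v) + (Fintype.card V : ℝ) * c ^ 2 := by
    have : ∀ v : V, (f v - c) ^ 2 = f v ^ 2 - 2 * c * f v + c ^ 2 := fun v => by ring
    rw [Finset.sum_congr rfl fun v _ => this v, Finset.sum_add_distrib,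
      Finset.sum_sub_distrib, ← Finset.mul_sum, Finset.sum_const, Finset.card_univ,
      nsmul_eq_mul]
  rw [hE, var_eq f hn]
  set n := (Fintype.card V : ℝ)
  set S1 := ∑ v : V, f v
  set S2 := ∑ v : V, f v ^ 2
  have heq2 : n * ((n * S2 - S1 ^ 2) / n ^ 2) = (n * S2 - S1 ^ 2) / n := by
    field_simp
  rw [heq2, div_le_iff₀ hn]
  nlinarith [sq_nonneg (S1 - n * c), hn]

lemma one_le_hardy {o : V} {S : Finset V} {u : V} (hu : u ∈ S) (huo : u ≠ o) {A' : ℝ}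
    (h : ∀ g : V → ℝ, ∑ v ∈ S, (∑ w ∈ pathE G o v, g w) ^ 2 ≤
      A' * ∑ w ∈ S.filter fun w => w ≠ o, (g w) ^ 2) : 1 ≤ A' := by
  set g : V → ℝ := fun w => if w = u then (1 : ℝ) else 0 with hg
  have humem : u ∈ pathE G o u := by
    unfold pathE
    simp [huo, SimpleGraph.dist_self]
  have h1 : ∀ v : V, (∑ w ∈ pathE G o v, g w) = if u ∈ pathE G o v then 1 else 0 := by
    intro v
    rw [hg]
    exact Finset.sum_ite_eq' (pathE G o v) u (fun _ => (1 : ℝ))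
  have hlhs : (1 : ℝ) ≤ ∑ v ∈ S, (∑ w ∈ pathE G o v, g w) ^ 2 := by
    have h2 := Finset.single_le_sum (f := fun v => (∑ w ∈ pathE G o v, g w) ^ 2)
      (fun i _ => sq_nonneg _) hu
    simp only [h1 u, if_pos humem] at h2
    simpa using h2
  have hrhs : ∑ w ∈ S.filter (fun w => w ≠ o), (g w) ^ 2 = 1 := by
    have : ∀ w : V, (g w) ^ 2 = if w = u then (1 : ℝ) else 0 := by
      intro w; rw [hg]; by_cases hw : w = u <;> simp [hw]
    rw [Finset.sum_congr rfl fun w _ => this w,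
      Finset.sum_ite_eq' _ u (fun _ => (1 : ℝ)), if_pos (by simp [hu, huo])]
  have := h g
  rw [hrhs, mul_one] at this
  linarith

lemma aux_upper (hG : G.IsTree) (o : V) [DecidableRel G.Adj] {δ A' : ℝ} (hδ0 : 0 < δ)
    (hA'0 : 0 < A') (S S' : Finset V)
    (hSconn : (G.induce (S : Set V)).Connected)
    (hS'conn : (G.induce (S' : Set V)).Connected)
    (hint : S ∩ S' = {o}) (huni : S ∪ S' = Finset.univ)
    (hS'card : δ * Fintype.card V ≤ S'.card)
    (g : V → ℝ)
    (hviol : A' * ∑ u ∈ S.filter (fun u => u ≠ o), (g u) ^ 2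
      < ∑ v ∈ S, (∑ u ∈ pathE G o v, g u) ^ 2) :
    ∃ f : V → ℝ, uniformVar f ≠ 0 ∧ dirichletForm G f / uniformVar f < 1 / (δ * A') := by
  have ho : o ∈ S ∩ S' := by rw [hint]; exact Finset.mem_singleton_self o
  have hoS : o ∈ S := (Finset.mem_inter.mp ho).1
  have hoS' : o ∈ S' := (Finset.mem_inter.mp ho).2
  have hn : 0 < (Fintype.card V : ℝ) := by
    have : Nonempty V := ⟨o⟩
    exact_mod_cast Fintype.card_pos
  set n := (Fintype.card V : ℝ) with hndef
  set g₀ : V → ℝ := fun u => if u ∈ S.filter (fun u => u ≠ o) then g u else 0 with hg₀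
  set f : V → ℝ := fun v => ∑ u ∈ pathE G o v, g₀ u with hf
  have hfS : ∀ v ∈ S, f v = ∑ u ∈ pathE G o v, g u := by
    intro v hv
    refine Finset.sum_congr rfl fun u hu => ?_
    rw [hg₀]
    simp only [if_pos (pathE_subset hG hSconn hoS hv hu)]
  have hfS' : ∀ v ∈ S', f v = 0 := by
    intro v hv
    refine Finset.sum_eq_zero fun u hu => ?_
    have hu' := pathE_subset hG hS'conn hoS' hv hu
    rw [Finset.mem_filter] at hu'
    rw [hg₀]
    simp only [Finset.mem_filter]
    rw [if_neg]
    rintro ⟨huS, huo⟩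
    have : u ∈ S ∩ S' := Finset.mem_inter.mpr ⟨huS, hu'.1⟩
    rw [hint, Finset.mem_singleton] at this
    exact huo this
  have hfo : f o = 0 := by rw [hf]; simp [pathE_self_empty hG]
  have hstep : ∀ u : V, u ≠ o → f u - f (par hG o u) = g₀ u := by
    intro u hu
    obtain ⟨hnm, hrec⟩ := pathE_recursion hG hu
    rw [hf]
    simp only []
    rw [hrec, Finset.sum_insert hnm]
    ring
  set B := ∑ u ∈ S.filter (fun u => u ≠ o), (g u) ^ 2 with hBdef
  set C := ∑ v ∈ S, f v ^ 2 with hCdef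
  have hCviol : A' * B < C := by
    rw [hCdef]
    rw [Finset.sum_congr rfl fun v hv => by rw [hfS v hv]]
    exact hviol
  have hB0 : 0 ≤ B := Finset.sum_nonneg fun u _ => sq_nonneg _
  have hC0 : 0 < C := lt_of_le_of_lt (by positivity) hCviol
  have hBpos : 0 < B := by
    rcases lt_or_eq_of_le hB0 with h | h
    · exact h
    · exfalso
      have hg0 : ∀ u ∈ S.filter (fun u => u ≠ o), (g u) ^ 2 = 0 := by
        intro u hu
        have := (Finset.sum_eq_zero_iff_of_nonneg fun u _ => sq_nonneg (g u)).mp h.symm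
        exact this u hu
      have hgz : ∀ u : V, g₀ u = 0 := by
        intro u
        rw [hg₀]
        by_cases hu : u ∈ S.filter (fun u => u ≠ o)
        · simp only [if_pos hu]
          exact pow_eq_zero_iff (n := 2) (by norm_num) |>.mp (hg0 u hu)
        · simp only [if_neg hu]
      have hfz : ∀ v : V, f v = 0 := fun v => Finset.sum_eq_zero fun u _ => hgz u
      have : C = 0 := Finset.sum_eq_zero fun v _ => by rw [hfz v]; ring
      rw [this] at hC0
      exact lt_irrefl _ hC0
  -- edge sum
  have hg₀sq : ∀ u : V, (g₀ u) ^ 2 = if u ∈ S.filter (fun u => u ≠ o) then (g u) ^ 2 else 0 := by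
    intro u
    rw [hg₀]
    by_cases hu : u ∈ S.filter (fun u => u ≠ o) <;> simp [hu]
  have hES : ∑ x : V, ∑ y ∈ G.neighborFinset x, (f x - f y) ^ 2 = 2 * B := by
    rw [decomp hG o (fun x y => (f x - f y) ^ 2) (fun x y => by ring)]
    have : ∑ u ∈ Finset.univ.filter (fun u => u ≠ o), (f u - f (par hG o u)) ^ 2
        = ∑ u ∈ Finset.univ.filter (fun u => u ≠ o), (g₀ u) ^ 2 := by
      refine Finset.sum_congr rfl fun u hu => ?_
      rw [Finset.mem_filter] at hu
      rw [hstep u hu.2]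
    rw [this]
    have hsub : S.filter (fun u => u ≠ o) ⊆ Finset.univ.filter (fun u => u ≠ o) := by
      intro x hx
      rw [Finset.mem_filter] at hx ⊢
      exact ⟨Finset.mem_univ x, hx.2⟩
    rw [Finset.sum_congr rfl fun u _ => hg₀sq u, Finset.sum_ite_mem,
      Finset.inter_eq_right.mpr hsub]
  have hDF : dirichletForm G f = B / n := by
    unfold dirichletForm
    rw [hES]
    rw [mul_div_mul_left _ _ (two_ne_zero (α := ℝ))]
  have hsum_sq : ∑ v : V, f v ^ 2 = C := by
    have h1 := Finset.sum_union_inter (s₁ := S) (s₂ := S') (f := fun v => f v ^ 2)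
    rw [huni, hint] at h1
    have h2 : ∑ v ∈ S', f v ^ 2 = 0 :=
      Finset.sum_eq_zero fun v hv => by rw [hfS' v hv]; ring
    have h3 : ∑ v ∈ ({o} : Finset V), f v ^ 2 = 0 := by
      rw [Finset.sum_singleton, hfo]; ring
    rw [h2, h3] at h1
    rw [hCdef]
    linarith [h1]
  have hsum_f : ∑ v : V, f v = ∑ v ∈ S.filter (fun v => v ≠ o), f v := by
    symm
    apply Finset.sum_subset (Finset.subset_univ _)
    intro v _ hv
    by_cases hvS : v ∈ S
    · have hvo : v = o := by
        by_contra hvo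
        exact hv (Finset.mem_filter.mpr ⟨hvS, hvo⟩)
      rw [hvo, hfo]
    · have hvS' : v ∈ S' := by
        have hvm : v ∈ S ∪ S' := by rw [huni]; exact Finset.mem_univ v
        rcases Finset.mem_union.mp hvm with h | h
        · exact absurd h hvS
        · exact h
      exact hfS' v hvS'
  have hcards : S.card + S'.card = Fintype.card V + 1 := by
    have := Finset.card_union_add_card_inter S S'
    rw [huni, hint, Finset.card_univ, Finset.card_singleton] at this
    omega
  have hScard1 : 1 ≤ S.card := Finset.card_pos.mpr ⟨o, hoS⟩
  have hfcard : ((S.filter (fun v => v ≠ o)).card : ℝ) = n - S'.card := by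
    rw [Finset.filter_ne', Finset.card_erase_of_mem hoS]
    rw [Nat.cast_sub hScard1]
    have hc : (S.card : ℝ) + S'.card = (Fintype.card V : ℝ) + 1 := by exact_mod_cast hcards
    rw [hndef]
    push_cast
    linarith
  have hCS : (∑ v : V, f v) ^ 2 ≤ (n - S'.card) * C := by
    rw [hsum_f]
    have h1 := sq_sum_le_card_mul_sum_sq (s := S.filter (fun v => v ≠ o)) (f := f)
    have h2 : ∑ v ∈ S.filter (fun v => v ≠ o), f v ^ 2 ≤ C :=
      Finset.sum_le_sum_of_subset_of_nonneg (Finset.filter_subset _ _)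
        (fun v _ _ => sq_nonneg _)
    have h3 : ((S.filter (fun v => v ≠ o)).card : ℝ)
          * (∑ v ∈ S.filter (fun v => v ≠ o), f v ^ 2) ≤ (n - S'.card) * C := by
      rw [← hfcard]
      exact mul_le_mul_of_nonneg_left h2 (Nat.cast_nonneg _)
    exact le_trans h1 h3
  have hS'le : δ * n ≤ (S'.card : ℝ) := hS'card
  have hkey : δ * n * C ≤ (S'.card : ℝ) * C := mul_le_mul_of_nonneg_right hS'le hC0.le
  have hVar : δ * C / n ≤ uniformVar f := by
    rw [var_eq f hn, hsum_sq, ← hndef]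
    rw [div_le_div_iff₀ hn (pow_pos hn 2)]
    have h5 : δ * n * C ≤ n * C - (∑ v : V, f v) ^ 2 := by nlinarith [hkey, hCS]
    nlinarith [mul_le_mul_of_nonneg_right h5 hn.le]
  have hVarpos : 0 < uniformVar f :=
    lt_of_lt_of_le (div_pos (mul_pos hδ0 hC0) hn) hVar
  refine ⟨f, ne_of_gt hVarpos, ?_⟩
  have hdcn : 0 < δ * C / n := div_pos (mul_pos hδ0 hC0) hn
  have hstep1 : dirichletForm G f / uniformVar f ≤ (B / n) / (δ * C / n) := by
    rw [hDF]
    exact div_le_div_of_nonneg_left (div_nonneg hB0 hn.le) hdcn hVar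
  have hstep2 : (B / n) / (δ * C / n) = B / (δ * C) := by
    rw [div_div_div_cancel_right₀ (ne_of_gt hn)]
  have hstep3 : B / (δ * C) < 1 / (δ * A') := by
    rw [div_lt_div_iff₀ (mul_pos hδ0 hC0) (mul_pos hδ0 hA'0)]
    nlinarith [hCviol, hδ0]
  calc dirichletForm G f / uniformVar f ≤ (B / n) / (δ * C / n) := hstep1
    _ = B / (δ * C) := hstep2
    _ < 1 / (δ * A') := hstep3

end SGH
end

/-- If the root `o` of a finite tree is a `δ`-center of mass witnessed by subtrees
`T`, `T̃` meeting only in `o`, and `A` is the smallest constant for which the Hardy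
inequalities hold on both `T` and `T̃`, then the spectral gap `λ` of the simple random
walk (the minimum of the Rayleigh quotient `E(f)/Var(f)`) satisfies
`1/A ≤ λ ≤ 1/(δA)`. -/
theorem spectral_gap_hardy_bounds {V : Type*} [Fintype V] [DecidableEq V]
    (G : SimpleGraph V) [DecidableRel G.Adj] (hG : G.IsTree) (o : V)
    (δ : ℝ) (hδ0 : 0 < δ) (T T' : Finset V)
    (hTconn : (G.induce (T : Set V)).Connected)
    (hT'conn : (G.induce (T' : Set V)).Connected)
    (hint : T ∩ T' = {o}) (huni : T ∪ T' = Finset.univ)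
    (hTcard : δ * Fintype.card V ≤ T.card) (hT'card : δ * Fintype.card V ≤ T'.card)
    (A : ℝ)
    (hA : IsLeast {A' : ℝ |
      (∀ g : V → ℝ, ∑ v ∈ T, (∑ u ∈ pathE G o v, g u) ^ 2 ≤
          A' * ∑ u ∈ T.filter fun u => u ≠ o, (g u) ^ 2) ∧
      (∀ g : V → ℝ, ∑ v ∈ T', (∑ u ∈ pathE G o v, g u) ^ 2 ≤
          A' * ∑ u ∈ T'.filter fun u => u ≠ o, (g u) ^ 2)} A)
    (lam : ℝ)
    (hlam : IsLeast {r : ℝ | ∃ f : V → ℝ, uniformVar f ≠ 0 ∧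
        r = dirichletForm G f / uniformVar f} lam) :
    1 / A ≤ lam ∧ lam ≤ 1 / (δ * A) := by

  classical
  obtain ⟨⟨f₀, hvar0, hf0eq⟩, hlamlb⟩ := hlam
  have hnV : 0 < Fintype.card V := by
    by_contra hc
    push_neg at hc
    have h0 : Fintype.card V = 0 := by omega
    have : IsEmpty V := Fintype.card_eq_zero_iff.mp h0
    apply hvar0
    unfold uniformVar
    simp
  have hn : 0 < (Fintype.card V : ℝ) := by exact_mod_cast hnV
  have hcard2 : 1 < Fintype.card V := by
    by_contra hc
    push_neg at hc
    have h1 : Fintype.card V = 1 := le_antisymm hc hnV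
    obtain ⟨a, ha⟩ := Finset.card_eq_one.mp
      (show (Finset.univ : Finset V).card = 1 by rw [Finset.card_univ]; exact h1)
    apply hvar0
    unfold uniformVar
    rw [ha, Finset.sum_singleton, Finset.sum_singleton, h1]
    norm_num
  obtain ⟨u, hu⟩ := Fintype.exists_ne_of_one_lt_card hcard2 o
  have hA1 : (1 : ℝ) ≤ A := by
    have humem : u ∈ T ∪ T' := by rw [huni]; exact Finset.mem_univ u
    rcases Finset.mem_union.mp humem with hmem | hmem
    · exact SGH.one_le_hardy hmem hu hA.1.1
    · exact SGH.one_le_hardy hmem hu hA.1.2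
  have hA0 : 0 < A := lt_of_lt_of_le one_pos hA1
  -- lower bound
  set h : V → ℝ := fun v => f₀ v - f₀ o with hh
  have h0 : h o = 0 := by rw [hh]; simp
  set g : V → ℝ := fun w => if w = o then 0 else h w - h (SGH.par hG o w) with hgdef
  have htel : ∀ v, ∑ w ∈ pathE G o v, g w = h v := by
    intro v
    have hcongr : ∀ w ∈ pathE G o v, g w = h w - h (SGH.par hG o w) := by
      intro w hw
      have hwo : w ≠ o := by
        unfold pathE at hw
        rw [Finset.mem_filter] at hw
        exact hw.2.1
      rw [hgdef]; simp only [if_neg hwo]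
    rw [Finset.sum_congr rfl hcongr]
    exact SGH.telescope hG o h h0 v
  have hHT := hA.1.1 g
  have hHT' := hA.1.2 g
  have heT : ∑ v ∈ T, (∑ w ∈ pathE G o v, g w) ^ 2 = ∑ v ∈ T, h v ^ 2 :=
    Finset.sum_congr rfl fun v _ => by rw [htel v]
  have heT' : ∑ v ∈ T', (∑ w ∈ pathE G o v, g w) ^ 2 = ∑ v ∈ T', h v ^ 2 :=
    Finset.sum_congr rfl fun v _ => by rw [htel v]
  rw [heT] at hHT
  rw [heT'] at hHT'
  have hsumT : ∑ v ∈ T, h v ^ 2 + ∑ v ∈ T', h v ^ 2 = ∑ v : V, h v ^ 2 := by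
    have h1 := Finset.sum_union_inter (s₁ := T) (s₂ := T') (f := fun v => h v ^ 2)
    rw [huni, hint, Finset.sum_singleton] at h1
    rw [h0] at h1
    norm_num at h1
    linarith
  have hsumg : (∑ w ∈ T.filter (fun w => w ≠ o), g w ^ 2)
      + (∑ w ∈ T'.filter (fun w => w ≠ o), g w ^ 2)
      = ∑ w ∈ Finset.univ.filter (fun w => w ≠ o), g w ^ 2 := by
    have h1 := Finset.sum_union_inter (s₁ := T.filter (fun w => w ≠ o))
      (s₂ := T'.filter (fun w => w ≠ o)) (f := fun w => g w ^ 2)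
    rw [← Finset.filter_union, huni, ← Finset.filter_inter_distrib, hint,
      Finset.filter_singleton] at h1
    simp only [ne_eq, not_true_eq_false, if_false, Finset.sum_empty, add_zero] at h1
    linarith
  have hES : ∑ x : V, ∑ y ∈ G.neighborFinset x, (f₀ x - f₀ y) ^ 2
      = 2 * ∑ w ∈ Finset.univ.filter (fun w => w ≠ o), (f₀ w - f₀ (SGH.par hG o w)) ^ 2 :=
    SGH.decomp hG o (fun x y => (f₀ x - f₀ y) ^ 2) (fun x y => by ring)
  have hES2 : ∑ w ∈ Finset.univ.filter (fun w => w ≠ o), (f₀ w - f₀ (SGH.par hG o w)) ^ 2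
      = ∑ w ∈ Finset.univ.filter (fun w => w ≠ o), g w ^ 2 := by
    refine Finset.sum_congr rfl fun w hw => ?_
    rw [Finset.mem_filter] at hw
    rw [hgdef]
    simp only [if_neg hw.2]
    rw [hh]
    ring
  have hDFe : dirichletForm G f₀ = (∑ w ∈ Finset.univ.filter (fun w => w ≠ o), g w ^ 2)
      / (Fintype.card V : ℝ) := by
    unfold dirichletForm
    rw [hES, hES2, mul_div_mul_left _ _ (two_ne_zero (α := ℝ))]
  have hvle := SGH.var_le_sq_dev f₀ hn (f₀ o)
  have hveq : ∑ v : V, (f₀ v - f₀ o) ^ 2 = ∑ v : V, h v ^ 2 := rfl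
  rw [hveq] at hvle
  have hVpos : 0 < uniformVar f₀ :=
    lt_of_le_of_ne (SGH.var_nonneg f₀ hn) (Ne.symm hvar0)
  have hchain : (Fintype.card V : ℝ) * uniformVar f₀
      ≤ A * ∑ w ∈ Finset.univ.filter (fun w => w ≠ o), g w ^ 2 := by
    calc (Fintype.card V : ℝ) * uniformVar f₀ ≤ ∑ v : V, h v ^ 2 := hvle
      _ = (∑ v ∈ T, h v ^ 2) + ∑ v ∈ T', h v ^ 2 := hsumT.symm
      _ ≤ A * (∑ w ∈ T.filter (fun w => w ≠ o), g w ^ 2)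
          + A * ∑ w ∈ T'.filter (fun w => w ≠ o), g w ^ 2 := add_le_add hHT hHT'
      _ = A * ((∑ w ∈ T.filter (fun w => w ≠ o), g w ^ 2)
          + ∑ w ∈ T'.filter (fun w => w ≠ o), g w ^ 2) := by ring
      _ = A * ∑ w ∈ Finset.univ.filter (fun w => w ≠ o), g w ^ 2 := by rw [hsumg]
  have hVarleq : uniformVar f₀ ≤ A * dirichletForm G f₀ := by
    rw [hDFe, ← mul_div_assoc, le_div_iff₀ hn]
    linarith [hchain]
  have hlow : 1 / A ≤ lam := by
    rw [hf0eq, div_le_div_iff₀ hA0 hVpos]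
    linarith [hVarleq]
  refine ⟨hlow, ?_⟩
  by_contra hcon
  push_neg at hcon
  have hlampos : 0 < lam := lt_of_lt_of_le (one_div_pos.mpr hA0) hlow
  set A' : ℝ := 1 / (δ * lam) with hA'def
  have hA'0 : 0 < A' := by rw [hA'def]; exact one_div_pos.mpr (mul_pos hδ0 hlampos)
  have hA'lt : A' < A := by
    rw [hA'def, div_lt_iff₀ (mul_pos hδ0 hlampos)]
    have h2 := (div_lt_iff₀ (mul_pos hδ0 hA0)).mp hcon
    nlinarith [h2]
  have hA'notin : ¬((∀ g : V → ℝ, ∑ v ∈ T, (∑ u ∈ pathE G o v, g u) ^ 2 ≤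
          A' * ∑ u ∈ T.filter fun u => u ≠ o, (g u) ^ 2) ∧
      (∀ g : V → ℝ, ∑ v ∈ T', (∑ u ∈ pathE G o v, g u) ^ 2 ≤
          A' * ∑ u ∈ T'.filter fun u => u ≠ o, (g u) ^ 2)) := by
    intro hmem
    exact absurd (hA.2 hmem) (not_le.mpr hA'lt)
  have hinv : 1 / (δ * A') = lam := by
    rw [hA'def]
    field_simp
  rw [not_and_or] at hA'notin
  rcases hA'notin with hv | hv
  · push_neg at hv
    obtain ⟨g', hg'⟩ := hv
    obtain ⟨fw, hfw1, hfw2⟩ := SGH.aux_upper hG o hδ0 hA'0 T T' hTconn hT'conn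
      hint huni hT'card g' hg'
    rw [hinv] at hfw2
    exact absurd (hlamlb ⟨fw, hfw1, rfl⟩) (not_le.mpr hfw2)
  · push_neg at hv
    obtain ⟨g', hg'⟩ := hv
    have hint' : T' ∩ T = {o} := by rw [Finset.inter_comm]; exact hint
    have huni' : T' ∪ T = Finset.univ := by rw [Finset.union_comm]; exact huni
    obtain ⟨fw, hfw1, hfw2⟩ := SGH.aux_upper hG o hδ0 hA'0 T' T hT'conn hTconn
      hint' huni' hTcard g' hg'
    rw [hinv] at hfw2
    exact absurd (hlamlb ⟨fw, hfw1, rfl⟩) (not_le.mpr hfw2)
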